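/- Assume the empirical setting, let λ ∈ ℝ, and let x₀ ∈ E have a unique nearest point x_{k*} in A₁ and a unique nearest point y_{ℓ*} in A₂. Then there exist an open neighborhood U of x₀ and constants C > 0, η > 0 such that for all x ∈ U and all t > 0, ‖∇F_λ(x,t) − 2(x − λ·x_{k*} − (1−λ)·y_{ℓ*})‖ ≤ C·e^{−η/t}. -/

import Mathlib

set_option maxHeartbeats 1000000
open InnerProductSpace


open MeasureTheory Metric Filter Topology

/-- The heat kernel `G_t(z) = (4πt)^{-d/2} exp(-‖z‖²/(4t))` on `EuclideanSpace ℝ (Fin d)`. -/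
noncomputable def heatKernel (d : ℕ) (t : ℝ) (z : EuclideanSpace ℝ (Fin d)) : ℝ :=
  (4 * Real.pi * t) ^ (-(d : ℝ) / 2) * Real.exp (-‖z‖ ^ 2 / (4 * t))

/-- The heat evolution `u(x,t) = ∫ G_t(x - y) dμ(y)` of a measure `μ`. -/
noncomputable def heatEvolution {d : ℕ} (μ : Measure (EuclideanSpace ℝ (Fin d)))
    (x : EuclideanSpace ℝ (Fin d)) (t : ℝ) : ℝ :=
  ∫ y, heatKernel d t (x - y) ∂μ

/-- The rescaled mixed potential `F_λ(x,t) = -4t (λ log u₁(x,t) + (1-λ) log u₂(x,t))`. -/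
noncomputable def mixedPotential {d : ℕ} (μ₁ μ₂ : Measure (EuclideanSpace ℝ (Fin d))) (lam : ℝ)
    (x : EuclideanSpace ℝ (Fin d)) (t : ℝ) : ℝ :=
  -4 * t * (lam * Real.log (heatEvolution μ₁ x t) +
    (1 - lam) * Real.log (heatEvolution μ₂ x t))

/-- The set `Π_A(x)` of nearest points of `x` in `A`. -/
def nearestPts {d : ℕ} (A : Set (EuclideanSpace ℝ (Fin d)))
    (x : EuclideanSpace ℝ (Fin d)) : Set (EuclideanSpace ℝ (Fin d)) :=
  {a ∈ A | ‖x - a‖ = Metric.infDist x A}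


section Helpers
variable {d : ℕ}
local notation "E" => EuclideanSpace ℝ (Fin d)

lemma hasGradientAt_normSq (a x : E) :
    HasGradientAt (fun y => ‖y - a‖ ^ 2) ((2:ℝ) • (x - a)) x := by
  have h1 : HasFDerivAt (fun y : E => y - a) (ContinuousLinearMap.id ℝ E) x :=
    (hasFDerivAt_id x).sub_const a
  have h2 := h1.inner ℝ h1
  rw [hasGradientAt_iff_hasFDerivAt]
  have heq : (fun y : E => ‖y - a‖ ^ 2) = fun y : E => (inner ℝ (y - a) (y - a) : ℝ) := by
    funext y; rw [real_inner_self_eq_norm_sq]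
  rw [heq]
  convert h2 using 1
  · rfl
  apply ContinuousLinearMap.ext
  intro v
  simp [fderivInnerCLM, real_inner_smul_left, toDual]
  simp [Finset.sum_sub_distrib, Finset.mul_sum, mul_comm, mul_sub, sub_mul]
  ring_nf
  rw [real_inner_comm (x - a) v, inner_sub_left]
  ring

noncomputable def sform {d n : ℕ} (w : Fin n → ℝ) (p : Fin n → EuclideanSpace ℝ (Fin d))
    (t : ℝ) (x : EuclideanSpace ℝ (Fin d)) : ℝ :=
  ∑ k, w k * Real.exp (-‖x - p k‖ ^ 2 / (4 * t))

lemma tds (c : ℝ) (v : E) :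
    (InnerProductSpace.toDual ℝ (EuclideanSpace ℝ (Fin d))) (c • v)
      = c • (InnerProductSpace.toDual ℝ (EuclideanSpace ℝ (Fin d))) v :=
  (InnerProductSpace.toDual ℝ (EuclideanSpace ℝ (Fin d))).map_smul c v

lemma hasGradientAt_gauss (t : ℝ) (a x : E) :
    HasGradientAt (fun y : E => Real.exp (-‖y - a‖ ^ 2 / (4 * t)))
      ((Real.exp (-‖x - a‖ ^ 2 / (4 * t)) * (-(4 * t)⁻¹ * 2)) • (x - a)) x := by
  have h := (hasGradientAt_normSq a x).hasFDerivAt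
  have h1 := h.const_mul (-(4 * t)⁻¹)
  have heq : (fun y : E => Real.exp (-‖y - a‖ ^ 2 / (4 * t)))
      = fun y : E => Real.exp (-(4 * t)⁻¹ * ‖y - a‖ ^ 2) := by
    funext y; congr 1; ring
  have h2 := h1.exp
  rw [hasGradientAt_iff_hasFDerivAt, heq]
  have harg : -‖x - a‖ ^ 2 / (4 * t) = -(4 * t)⁻¹ * ‖x - a‖ ^ 2 := by ring
  rw [harg]
  convert h2 using 1
  · rfl
  simp only [tds, smul_smul]

lemma hasGradientAt_sform {n : ℕ} (w : Fin n → ℝ) (p : Fin n → E) (t : ℝ) (x : E) :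
    HasGradientAt (sform w p t)
      (∑ k, (w k * Real.exp (-‖x - p k‖ ^ 2 / (4 * t)) * (-(4 * t)⁻¹ * 2)) • (x - p k)) x := by
  rw [hasGradientAt_iff_hasFDerivAt, map_sum]
  have : sform w p t = fun y : E => ∑ k, w k * Real.exp (-‖y - p k‖ ^ 2 / (4 * t)) := rfl
  rw [this]
  apply HasFDerivAt.fun_sum
  intro k _
  have := ((hasGradientAt_gauss t (p k) x).hasFDerivAt).const_mul (w k)
  convert this using 1
  · rfl
  simp only [tds, smul_smul]
  congr 1
  ring

lemma hasGradientAt_potential {n : ℕ} (w : Fin n → ℝ) (p : Fin n → E) (t : ℝ) (ht : 0 < t)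
    (x : E) (hS : 0 < sform w p t x) :
    HasGradientAt (fun y : E => -4 * t * Real.log (sform w p t y))
      (∑ k, (2 * (w k * Real.exp (-‖x - p k‖ ^ 2 / (4 * t)) / sform w p t x)) • (x - p k)) x := by
  have hlog := ((hasGradientAt_sform w p t x).hasFDerivAt.log hS.ne').const_mul (-4 * t)
  rw [hasGradientAt_iff_hasFDerivAt]
  convert hlog using 1
  · rfl
  simp only [map_sum, tds, Finset.smul_sum, smul_smul]
  apply Finset.sum_congr rfl
  intro k _
  congr 1
  field_simp

lemma heatEvolution_eq {n : ℕ} (w : Fin n → ℝ) (p : Fin n → E) (hw : ∀ k, 0 ≤ w k)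
    (μ : Measure E) (hμ : μ = ∑ k, ENNReal.ofReal (w k) • Measure.dirac (p k))
    (x : E) (t : ℝ) :
    heatEvolution μ x t = (4 * Real.pi * t) ^ (-(d:ℝ)/2) * sform w p t x := by
  have hcont : Continuous (fun y : E => heatKernel d t (x - y)) := by
    unfold heatKernel
    exact continuous_const.mul (Real.continuous_exp.comp
      ((((continuous_const.sub continuous_id).norm.pow 2).neg).div_const _))
  have hint : ∀ k : Fin n, Integrable (fun y : E => heatKernel d t (x - y))
      (ENNReal.ofReal (w k) • Measure.dirac (p k)) := by
    intro k
    refine Integrable.smul_measure ?_ ENNReal.ofReal_ne_top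
    refine ⟨hcont.aestronglyMeasurable, ?_⟩
    rw [HasFiniteIntegral, lintegral_dirac]
    exact ENNReal.coe_lt_top
  rw [heatEvolution, hμ, integral_finset_sum_measure (fun k _ => hint k)]
  simp only [integral_smul_measure, integral_dirac, ENNReal.toReal_ofReal (hw _)]
  rw [sform, Finset.mul_sum]
  apply Finset.sum_congr rfl
  intro k _
  rw [heatKernel]
  simp only [smul_eq_mul]
  ring

open Classical in
lemma gap_lemma {n : ℕ} (p : Fin n → E) (x₀ : E) (kstar : Fin n)
    (hk : nearestPts (Set.range p) x₀ = {p kstar}) :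
    ∃ δ > (0:ℝ), ∃ U : Set E, IsOpen U ∧ x₀ ∈ U ∧ ∀ x ∈ U, ∀ k, p k ≠ p kstar →
      δ ≤ ‖x - p k‖ ^ 2 - ‖x - p kstar‖ ^ 2 := by
  have hmem : p kstar ∈ nearestPts (Set.range p) x₀ := by rw [hk]; rfl
  have hstar : ‖x₀ - p kstar‖ = Metric.infDist x₀ (Set.range p) := hmem.2
  have hgt : ∀ k, p k ≠ p kstar → ‖x₀ - p kstar‖ < ‖x₀ - p k‖ := by
    intro k hne
    have hle : Metric.infDist x₀ (Set.range p) ≤ ‖x₀ - p k‖ := by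
      rw [← dist_eq_norm]
      exact Metric.infDist_le_dist_of_mem ⟨k, rfl⟩
    rcases lt_or_eq_of_le hle with h | h
    · rw [hstar]; exact h
    · exfalso
      have : p k ∈ nearestPts (Set.range p) x₀ := ⟨⟨k, rfl⟩, h.symm⟩
      rw [hk] at this
      exact hne this
  set g : Fin n → E → ℝ := fun k x => ‖x - p k‖ ^ 2 - ‖x - p kstar‖ ^ 2 with hg
  have hgpos : ∀ k, p k ≠ p kstar → 0 < g k x₀ := by
    intro k hne
    have := hgt k hne
    have h2 : ‖x₀ - p kstar‖ ^ 2 < ‖x₀ - p k‖ ^ 2 := by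
      apply pow_lt_pow_left₀ this (norm_nonneg _)
      norm_num
    simpa [hg] using sub_pos.mpr h2
  have hgcont : ∀ k, Continuous (g k) := by
    intro k
    exact ((continuous_id.sub continuous_const).norm.pow 2).sub
      ((continuous_id.sub continuous_const).norm.pow 2)
  set bad : Finset (Fin n) := Finset.univ.filter (fun k => p k ≠ p kstar) with hbaddef
  by_cases hbad : bad.Nonempty
  · set δ := (bad.inf' hbad (fun k => g k x₀)) / 2 with hδdef
    have hinfpos : 0 < bad.inf' hbad (fun k => g k x₀) := by
      rw [Finset.lt_inf'_iff]
      intro k hkmem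
      exact hgpos k (Finset.mem_filter.mp hkmem).2
    refine ⟨δ, by positivity, ⋂ k ∈ bad, {x | δ < g k x}, ?_, ?_, ?_⟩
    · exact isOpen_biInter_finset (fun k _ => isOpen_lt continuous_const (hgcont k))
    · simp only [Set.mem_iInter, Set.mem_setOf_eq]
      intro k hkmem
      calc δ < bad.inf' hbad (fun k => g k x₀) := by
                rw [hδdef]; linarith
        _ ≤ g k x₀ := Finset.inf'_le _ hkmem
    · intro x hx k hne
      have hkmem : k ∈ bad := Finset.mem_filter.mpr ⟨Finset.mem_univ k, hne⟩
      have := Set.mem_iInter.mp hx k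
      have := Set.mem_iInter.mp this hkmem
      exact le_of_lt this
  · refine ⟨1, one_pos, Set.univ, isOpen_univ, Set.mem_univ _, ?_⟩
    intro x _ k hne
    exact absurd (Finset.mem_filter.mpr ⟨Finset.mem_univ k, hne⟩)
      (fun h => hbad ⟨k, h⟩)

lemma sform_pos {n : ℕ} (w : Fin n → ℝ) (p : Fin n → E) (hw : ∀ k, 0 < w k)
    (t : ℝ) (x : E) (k0 : Fin n) : 0 < sform w p t x := by
  have : Nonempty (Fin n) := ⟨k0⟩
  exact Finset.sum_pos (fun k _ => mul_pos (hw k) (Real.exp_pos _)) Finset.univ_nonempty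

lemma sum_bound_gen {n : ℕ} (w e : Fin n → ℝ) (S : ℝ) (x : E) (p : Fin n → E)
    (kstar : Fin n) (r : ℝ)
    (hw : ∀ k, 0 < w k) (he : ∀ k, 0 < e k) (hS : S = ∑ k, w k * e k) (hr : 0 ≤ r)
    (hbound : ∀ k, p k ≠ p kstar → e k ≤ e kstar * r) :
    ‖(∑ k, (2 * (w k * e k / S)) • (x - p k)) - (2:ℝ) • (x - p kstar)‖
      ≤ (∑ k, 2 * (w k / w kstar) * ‖p kstar - p k‖) * r := by
  have hSpos : 0 < S := by
    rw [hS]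
    have : Nonempty (Fin n) := ⟨kstar⟩
    exact Finset.sum_pos (fun k _ => mul_pos (hw k) (he k)) Finset.univ_nonempty
  have hsum2 : ∑ k, 2 * (w k * e k / S) = 2 := by
    have h1 : ∑ k, 2 * (w k * e k / S) = 2 * (∑ k, w k * e k) / S := by
      rw [Finset.mul_sum, Finset.sum_div]
      exact Finset.sum_congr rfl (fun k _ => by ring)
    rw [h1, ← hS]
    field_simp
  have hvec : (∑ k, (2 * (w k * e k / S)) • (x - p k)) - (2:ℝ) • (x - p kstar)
      = ∑ k, (2 * (w k * e k / S)) • (p kstar - p k) := by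
    have h2s : (2:ℝ) • (x - p kstar) = ∑ k, (2 * (w k * e k / S)) • (x - p kstar) := by
      rw [← Finset.sum_smul, hsum2]
    rw [h2s, ← Finset.sum_sub_distrib]
    apply Finset.sum_congr rfl
    intro k _
    rw [← smul_sub]
    congr 1
    abel
  rw [hvec]
  calc ‖∑ k, (2 * (w k * e k / S)) • (p kstar - p k)‖
      ≤ ∑ k, ‖(2 * (w k * e k / S)) • (p kstar - p k)‖ := norm_sum_le _ _
    _ ≤ ∑ k, (2 * (w k / w kstar) * ‖p kstar - p k‖) * r := by
        apply Finset.sum_le_sum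
        intro k _
        have hq0 : (0:ℝ) ≤ 2 * (w k * e k / S) := by
          have := div_pos (mul_pos (hw k) (he k)) hSpos
          linarith
        rw [norm_smul, Real.norm_eq_abs, abs_of_nonneg hq0]
        by_cases hne : p k = p kstar
        · rw [hne]
          simp
        · have hq : w k * e k / S ≤ (w k / w kstar) * r := by
            have hSlb : w kstar * e kstar ≤ S := by
              rw [hS]
              exact Finset.single_le_sum
                (fun k _ => le_of_lt (mul_pos (hw k) (he k))) (Finset.mem_univ kstar)
            have h1 : w k * e k / S ≤ w k * e k / (w kstar * e kstar) :=
              div_le_div_of_nonneg_left (mul_pos (hw k) (he k)).le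
                (mul_pos (hw kstar) (he kstar)) hSlb
            have h2 : w k * e k / (w kstar * e kstar)
                ≤ w k * (e kstar * r) / (w kstar * e kstar) := by
              apply div_le_div_of_nonneg_right (c := w kstar * e kstar)
                (mul_le_mul_of_nonneg_left (hbound k hne) (le_of_lt (hw k)))
                (mul_pos (hw kstar) (he kstar)).le
            have h3 : w k * (e kstar * r) / (w kstar * e kstar) = (w k / w kstar) * r := by
              field_simp [(he kstar).ne', (hw kstar).ne']
            linarith
          calc 2 * (w k * e k / S) * ‖p kstar - p k‖
              ≤ 2 * ((w k / w kstar) * r) * ‖p kstar - p k‖ := by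
                apply mul_le_mul_of_nonneg_right _ (norm_nonneg _)
                linarith
            _ = 2 * (w k / w kstar) * ‖p kstar - p k‖ * r := by ring
    _ = (∑ k, 2 * (w k / w kstar) * ‖p kstar - p k‖) * r := by rw [Finset.sum_mul]

end Helpers

theorem quantitative_gradient_convergence_outside_interface
    (d : ℕ) (hd : 1 ≤ d)
    (n₁ n₂ : ℕ)
    (xs : Fin n₁ → EuclideanSpace ℝ (Fin d)) (ys : Fin n₂ → EuclideanSpace ℝ (Fin d))
    (w₁ : Fin n₁ → ℝ) (w₂ : Fin n₂ → ℝ)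
    (hw₁pos : ∀ k, 0 < w₁ k) (hw₂pos : ∀ ℓ, 0 < w₂ ℓ)
    (hw₁sum : ∑ k, w₁ k = 1) (hw₂sum : ∑ ℓ, w₂ ℓ = 1)
    (μ₁ μ₂ : Measure (EuclideanSpace ℝ (Fin d)))
    (hμ₁ : μ₁ = ∑ k, ENNReal.ofReal (w₁ k) • Measure.dirac (xs k))
    (hμ₂ : μ₂ = ∑ ℓ, ENNReal.ofReal (w₂ ℓ) • Measure.dirac (ys ℓ))
    (A₁ A₂ : Set (EuclideanSpace ℝ (Fin d)))
    (hA₁ : A₁ = Set.range xs) (hA₂ : A₂ = Set.range ys)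
    (lam : ℝ)
    (x₀ : EuclideanSpace ℝ (Fin d))
    (kstar : Fin n₁) (lstar : Fin n₂)
    (hk : nearestPts A₁ x₀ = {xs kstar})
    (hl : nearestPts A₂ x₀ = {ys lstar}) :
    ∃ U : Set (EuclideanSpace ℝ (Fin d)), IsOpen U ∧ x₀ ∈ U ∧
      ∃ C > (0 : ℝ), ∃ η > (0 : ℝ),
        ∀ x ∈ U, ∀ t : ℝ, 0 < t →
          ‖gradient (fun x' => mixedPotential μ₁ μ₂ lam x' t) x -
              (2 : ℝ) • (x - lam • xs kstar - (1 - lam) • ys lstar)‖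
            ≤ C * Real.exp (-η / t) := by
  subst hA₁ hA₂
  obtain ⟨δ₁, hδ₁, U₁, hU₁o, hU₁x, hgap₁⟩ := gap_lemma xs x₀ kstar hk
  obtain ⟨δ₂, hδ₂, U₂, hU₂o, hU₂x, hgap₂⟩ := gap_lemma ys x₀ lstar hl
  set B₁ : ℝ := ∑ k, 2 * (w₁ k / w₁ kstar) * ‖xs kstar - xs k‖ with hB₁def
  set B₂ : ℝ := ∑ ℓ, 2 * (w₂ ℓ / w₂ lstar) * ‖ys lstar - ys ℓ‖ with hB₂def
  have hB₁ : 0 ≤ B₁ := Finset.sum_nonneg fun k _ => by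
    have := div_nonneg (hw₁pos k).le (hw₁pos kstar).le
    positivity
  have hB₂ : 0 ≤ B₂ := Finset.sum_nonneg fun ℓ _ => by
    have := div_nonneg (hw₂pos ℓ).le (hw₂pos lstar).le
    positivity
  set η : ℝ := min δ₁ δ₂ / 4 with hηdef
  have hη : 0 < η := by
    have := lt_min hδ₁ hδ₂
    positivity
  refine ⟨U₁ ∩ U₂, hU₁o.inter hU₂o, ⟨hU₁x, hU₂x⟩,
    |lam| * B₁ + |1 - lam| * B₂ + 1, by positivity, η, hη, ?_⟩
  rintro x ⟨hx1, hx2⟩ t ht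
  set r : ℝ := Real.exp (-η / t) with hrdef
  have hr : 0 < r := Real.exp_pos _
  set e₁ : Fin n₁ → ℝ := fun k => Real.exp (-‖x - xs k‖ ^ 2 / (4 * t)) with he₁
  set e₂ : Fin n₂ → ℝ := fun ℓ => Real.exp (-‖x - ys ℓ‖ ^ 2 / (4 * t)) with he₂
  have hS₁ := sform_pos w₁ xs hw₁pos t x kstar
  have hS₂ := sform_pos w₂ ys hw₂pos t x lstar
  set c : ℝ := (4 * Real.pi * t) ^ (-(d : ℝ) / 2) with hcdef
  have hc : 0 < c := Real.rpow_pos_of_pos (by positivity) _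
  -- function identity
  have funeq : (fun x' => mixedPotential μ₁ μ₂ lam x' t)
      = fun x' => (-4 * t * Real.log c) +
          (lam * (-4 * t * Real.log (sform w₁ xs t x')) +
           (1 - lam) * (-4 * t * Real.log (sform w₂ ys t x'))) := by
    funext x'
    rw [mixedPotential,
      heatEvolution_eq w₁ xs (fun k => (hw₁pos k).le) μ₁ hμ₁ x' t,
      heatEvolution_eq w₂ ys (fun ℓ => (hw₂pos ℓ).le) μ₂ hμ₂ x' t,
      Real.log_mul hc.ne' (sform_pos w₁ xs hw₁pos t x' kstar).ne',
      Real.log_mul hc.ne' (sform_pos w₂ ys hw₂pos t x' lstar).ne']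
    ring
  set G₁ : EuclideanSpace ℝ (Fin d) :=
    ∑ k, (2 * (w₁ k * e₁ k / sform w₁ xs t x)) • (x - xs k) with hG₁def
  set G₂ : EuclideanSpace ℝ (Fin d) :=
    ∑ ℓ, (2 * (w₂ ℓ * e₂ ℓ / sform w₂ ys t x)) • (x - ys ℓ) with hG₂def
  have H₁ := hasGradientAt_potential w₁ xs t ht x hS₁
  have H₂ := hasGradientAt_potential w₂ ys t ht x hS₂
  have HF := (((H₁.hasFDerivAt.const_mul lam).add
      (H₂.hasFDerivAt.const_mul (1 - lam))).const_add (-4 * t * Real.log c))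
  have hasGrad : HasGradientAt (fun x' => (-4 * t * Real.log c) +
      (lam * (-4 * t * Real.log (sform w₁ xs t x')) +
       (1 - lam) * (-4 * t * Real.log (sform w₂ ys t x'))))
      (lam • G₁ + (1 - lam) • G₂) x := by
    rw [hasGradientAt_iff_hasFDerivAt, map_add, tds, tds]
    exact HF
  have hgradeq : gradient (fun x' => mixedPotential μ₁ μ₂ lam x' t) x
      = lam • G₁ + (1 - lam) • G₂ := by
    rw [funeq]
    exact hasGrad.gradient
  rw [hgradeq]
  have hsplit : lam • G₁ + (1 - lam) • G₂ -
      (2 : ℝ) • (x - lam • xs kstar - (1 - lam) • ys lstar)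
      = lam • (G₁ - (2:ℝ) • (x - xs kstar)) + (1 - lam) • (G₂ - (2:ℝ) • (x - ys lstar)) := by
    module
  rw [hsplit]
  -- bounds
  have hb₁ : ‖G₁ - (2:ℝ) • (x - xs kstar)‖ ≤ B₁ * r := by
    apply sum_bound_gen w₁ e₁ (sform w₁ xs t x) x xs kstar r hw₁pos
      (fun k => Real.exp_pos _) rfl hr.le
    intro k hne
    rw [he₁]
    simp only
    rw [← Real.exp_add]
    apply Real.exp_le_exp.mpr
    have hgapk := hgap₁ x hx1 k hne
    have hηδ : 4 * η ≤ δ₁ := by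
      rw [hηdef]
      have := min_le_left δ₁ δ₂
      linarith
    rw [div_add_div _ _ (by positivity : (4*t) ≠ 0) ht.ne', div_le_div_iff₀ (by positivity) (by positivity)]
    nlinarith [mul_pos ht ht]
  have hb₂ : ‖G₂ - (2:ℝ) • (x - ys lstar)‖ ≤ B₂ * r := by
    apply sum_bound_gen w₂ e₂ (sform w₂ ys t x) x ys lstar r hw₂pos
      (fun ℓ => Real.exp_pos _) rfl hr.le
    intro ℓ hne
    rw [he₂]
    simp only
    rw [← Real.exp_add]
    apply Real.exp_le_exp.mpr
    have hgapl := hgap₂ x hx2 ℓ hne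
    have hηδ : 4 * η ≤ δ₂ := by
      rw [hηdef]
      have := min_le_right δ₁ δ₂
      linarith
    rw [div_add_div _ _ (by positivity : (4*t) ≠ 0) ht.ne', div_le_div_iff₀ (by positivity) (by positivity)]
    nlinarith [mul_pos ht ht]
  calc ‖lam • (G₁ - (2:ℝ) • (x - xs kstar)) + (1 - lam) • (G₂ - (2:ℝ) • (x - ys lstar))‖
      ≤ |lam| * ‖G₁ - (2:ℝ) • (x - xs kstar)‖ + |1 - lam| * ‖G₂ - (2:ℝ) • (x - ys lstar)‖ := by
        refine (norm_add_le _ _).trans ?_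
        rw [norm_smul, norm_smul, Real.norm_eq_abs, Real.norm_eq_abs]
    _ ≤ |lam| * (B₁ * r) + |1 - lam| * (B₂ * r) := by
        apply add_le_add
        · exact mul_le_mul_of_nonneg_left hb₁ (abs_nonneg _)
        · exact mul_le_mul_of_nonneg_left hb₂ (abs_nonneg _)
    _ ≤ (|lam| * B₁ + |1 - lam| * B₂ + 1) * r := by
        have h1 : |lam| * (B₁ * r) = (|lam| * B₁) * r := by ring
        have h2 : |1 - lam| * (B₂ * r) = (|1 - lam| * B₂) * r := by ring
        rw [h1, h2, ← add_mul]
        apply mul_le_mul_of_nonneg_right _ hr.le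
        have : 0 ≤ |lam| * B₁ := mul_nonneg (abs_nonneg _) hB₁
        have : 0 ≤ |1 - lam| * B₂ := mul_nonneg (abs_nonneg _) hB₂
        linarith
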